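/- Let R be a commutative ring, W_{D^2} = R[X,Y]/(X^2,Y^2), W_D = R[Z]/(Z^2), and W_{D{3}_2} as above. The cone over the diagram formed by the three copies of W_{D^2} with maps W_{i_{jk}} from W_{D{3}_2}, together with the copies of W_D equalizing overlaps (via the maps dual to d ↦ (d,0) and d ↦ (0,d) into D^2), is a limit cone: giving an element of W_{D{3}_2} is equivalent to giving elements a_{12}, a_{13}, a_{23} ∈ W_{D^2} whose restrictions along the appropriate coordinate inclusions W_{D^2} → W_D agree pairwise as specified by the shared index. -/

import Mathlib

set_option synthInstance.maxHeartbeats 1000000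
set_option maxHeartbeats 1000000

open Finset

/-- The ideal of `R[X₁,X₂,X₃]` generated by the squares `Xᵢ²` together with all
monomials of degree `3` (indices with repetition). -/
noncomputable abbrev d32Ideal (R : Type*) [CommRing R] : Ideal (MvPolynomial (Fin 3) R) :=
  Ideal.span ((Set.range fun i : Fin 3 => (MvPolynomial.X i : MvPolynomial (Fin 3) R) ^ 2) ∪
    {p | ∃ f : Fin 3 → Fin 3, p = ∏ k, MvPolynomial.X (f k)})

/-- The Weil algebra `W_{D{3}₂}`. -/
abbrev WeilD32 (R : Type*) [CommRing R] : Type _ :=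
  MvPolynomial (Fin 3) R ⧸ d32Ideal R

/-- The ideal `(X², Y²)` of `R[X,Y]`. -/
noncomputable abbrev sq2Ideal (R : Type*) [CommRing R] : Ideal (MvPolynomial (Fin 2) R) :=
  Ideal.span (Set.range fun i : Fin 2 => (MvPolynomial.X i : MvPolynomial (Fin 2) R) ^ 2)

/-- The Weil algebra `W_{D²} = R[X,Y]/(X²,Y²)`. -/
abbrev WeilD2 (R : Type*) [CommRing R] : Type _ :=
  MvPolynomial (Fin 2) R ⧸ sq2Ideal R

/-- The Weil algebra `W_D = R[Z]/(Z²)`. -/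
abbrev WeilD1 (R : Type*) [CommRing R] : Type _ :=
  Polynomial R ⧸ Ideal.span {(Polynomial.X : Polynomial R) ^ 2}

/-- `p` is the algebra map `W_{i_{jk}} : W_{D{3}₂} → W_{D²}`: `X_j ↦ X`, `X_k ↦ Y`,
remaining variable to `0`. -/
def IsProjPair {R : Type*} [CommRing R] (j k : Fin 3)
    (p : WeilD32 R →ₐ[R] WeilD2 R) : Prop :=
  p (Ideal.Quotient.mk (d32Ideal R) (MvPolynomial.X j)) =
      Ideal.Quotient.mk (sq2Ideal R) (MvPolynomial.X 0) ∧
    p (Ideal.Quotient.mk (d32Ideal R) (MvPolynomial.X k)) =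
      Ideal.Quotient.mk (sq2Ideal R) (MvPolynomial.X 1) ∧
    ∀ l : Fin 3, l ≠ j → l ≠ k → p (Ideal.Quotient.mk (d32Ideal R) (MvPolynomial.X l)) = 0

/-- `q` is the algebra map `W_{D²} → W_D` dual to `i₁ : d ↦ (d,0)` (when `fst = true`:
`X ↦ Z, Y ↦ 0`) or to `i₂ : d ↦ (0,d)` (`X ↦ 0, Y ↦ Z`). -/
def IsRestrict {R : Type*} [CommRing R] (fst : Bool)
    (q : WeilD2 R →ₐ[R] WeilD1 R) : Prop :=
  if fst then
    q (Ideal.Quotient.mk (sq2Ideal R) (MvPolynomial.X 0)) =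
        Ideal.Quotient.mk _ (Polynomial.X : Polynomial R) ∧
      q (Ideal.Quotient.mk (sq2Ideal R) (MvPolynomial.X 1)) = 0
  else
    q (Ideal.Quotient.mk (sq2Ideal R) (MvPolynomial.X 0)) = 0 ∧
      q (Ideal.Quotient.mk (sq2Ideal R) (MvPolynomial.X 1)) =
        Ideal.Quotient.mk _ (Polynomial.X : Polynomial R)

section Aux

open MvPolynomial

variable {R : Type*} [CommRing R] {A : Type*} [CommRing A] [Algebra R A]

/-- squares of the variables vanish in `WeilD32`. -/
lemma sq_x3 (i : Fin 3) :
    (Ideal.Quotient.mk (d32Ideal R) (MvPolynomial.X i)) ^ 2 = 0 := by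
  rw [← map_pow, Ideal.Quotient.eq_zero_iff_mem]
  exact Ideal.subset_span (Or.inl ⟨i, rfl⟩)

lemma cube_x3 :
    (Ideal.Quotient.mk (d32Ideal R) (MvPolynomial.X 0)) *
      Ideal.Quotient.mk (d32Ideal R) (MvPolynomial.X 1) *
      Ideal.Quotient.mk (d32Ideal R) (MvPolynomial.X 2) = 0 := by
  rw [← map_mul, ← map_mul, Ideal.Quotient.eq_zero_iff_mem]
  refine Ideal.subset_span (Or.inr ⟨id, ?_⟩)
  rw [Fin.prod_univ_three]
  rfl

lemma sq_x2 (i : Fin 2) :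
    (Ideal.Quotient.mk (sq2Ideal R) (MvPolynomial.X i)) ^ 2 = 0 := by
  rw [← map_pow, Ideal.Quotient.eq_zero_iff_mem]
  exact Ideal.subset_span ⟨i, rfl⟩

/-- lift an algebra map out of `WeilD2` from a pair of square-zero elements. -/
noncomputable def liftD2 (v : Fin 2 → A) (hv : ∀ i, v i ^ 2 = 0) :
    WeilD2 R →ₐ[R] A :=
  Ideal.Quotient.liftₐ (sq2Ideal R) (MvPolynomial.aeval v) (by
    intro a ha
    rw [← RingHom.mem_ker]
    refine Ideal.span_le.2 ?_ ha
    rintro _ ⟨i, rfl⟩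
    simp [RingHom.mem_ker, hv i])

@[simp] lemma liftD2_mk (v : Fin 2 → A) (hv : ∀ i, v i ^ 2 = 0) (i : Fin 2) :
    liftD2 v hv (Ideal.Quotient.mk (sq2Ideal R) (MvPolynomial.X i)) = v i := by
  simp [liftD2, Ideal.Quotient.liftₐ_apply]
  exact (Ideal.Quotient.lift_mk _ _ _).trans (by simp)

/-- lift an algebra map out of `WeilD1` from a square-zero element. -/
noncomputable def liftD1 (z : A) (hz : z ^ 2 = 0) : WeilD1 R →ₐ[R] A :=
  Ideal.Quotient.liftₐ _ (Polynomial.aeval z) (by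
    intro a ha
    rw [← RingHom.mem_ker]
    refine Ideal.span_le.2 ?_ ha
    rintro _ rfl
    simp [RingHom.mem_ker, hz])

@[simp] lemma liftD1_mk (z : A) (hz : z ^ 2 = 0) :
    liftD1 z hz (Ideal.Quotient.mk _ (Polynomial.X : Polynomial R)) = z := by
  simp [liftD1, Ideal.Quotient.liftₐ_apply]
  exact (Ideal.Quotient.lift_mk _ _ _).trans (by simp)

lemma extD2 (f g : WeilD2 R →ₐ[R] A)
    (h0 : f (Ideal.Quotient.mk (sq2Ideal R) (MvPolynomial.X 0)) =
      g (Ideal.Quotient.mk (sq2Ideal R) (MvPolynomial.X 0)))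
    (h1 : f (Ideal.Quotient.mk (sq2Ideal R) (MvPolynomial.X 1)) =
      g (Ideal.Quotient.mk (sq2Ideal R) (MvPolynomial.X 1))) : f = g := by
  refine Ideal.Quotient.algHom_ext R ?_
  refine MvPolynomial.algHom_ext fun i => ?_
  fin_cases i
  · simpa using h0
  · simpa using h1

lemma extD1 (f g : WeilD1 R →ₐ[R] A)
    (h : f (Ideal.Quotient.mk _ (Polynomial.X : Polynomial R)) =
      g (Ideal.Quotient.mk _ (Polynomial.X : Polynomial R))) : f = g := by
  refine Ideal.Quotient.algHom_ext R ?_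
  refine Polynomial.algHom_ext ?_
  simpa using h

end Aux

/-- The standard quasi-colimit representation of `D{3}₂`, dualized: giving an element of
`W_{D{3}₂}` is equivalent to giving `a₁₂, a₁₃, a₂₃ ∈ W_{D²}` agreeing pairwise along the
restriction maps `W_{D²} → W_D` as specified by the shared index: the cone of the maps
`W_{i_{jk}}` is a limit cone. -/
theorem weilD32_limit_cone {R : Type*} [CommRing R]
    (p₁₂ p₁₃ p₂₃ : WeilD32 R →ₐ[R] WeilD2 R)
    (h₁₂ : IsProjPair 0 1 p₁₂) (h₁₃ : IsProjPair 0 2 p₁₃) (h₂₃ : IsProjPair 1 2 p₂₃)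
    (q₁ q₂ : WeilD2 R →ₐ[R] WeilD1 R)
    (hq₁ : IsRestrict true q₁) (hq₂ : IsRestrict false q₂)
    (a₁₂ a₁₃ a₂₃ : WeilD2 R)
    (c₁ : q₁ a₁₂ = q₁ a₁₃) (c₂ : q₂ a₁₂ = q₁ a₂₃) (c₃ : q₂ a₁₃ = q₂ a₂₃) :
    ∃! a : WeilD32 R, p₁₂ a = a₁₂ ∧ p₁₃ a = a₁₃ ∧ p₂₃ a = a₂₃ := by
  classical
  obtain ⟨h₁₂X, h₁₂Y, h₁₂O⟩ := h₁₂
  obtain ⟨h₁₃X, h₁₃Y, h₁₃O⟩ := h₁₃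
  obtain ⟨h₂₃X, h₂₃Y, h₂₃O⟩ := h₂₃
  rw [IsRestrict, if_pos rfl] at hq₁
  rw [IsRestrict, if_neg (by simp)] at hq₂
  obtain ⟨hq₁X, hq₁Y⟩ := hq₁
  obtain ⟨hq₂X, hq₂Y⟩ := hq₂
  have h₁₂x2 : p₁₂ (Ideal.Quotient.mk (d32Ideal R) (MvPolynomial.X 2)) = 0 :=
    h₁₂O 2 (by decide) (by decide)
  have h₁₃x1 : p₁₃ (Ideal.Quotient.mk (d32Ideal R) (MvPolynomial.X 1)) = 0 :=
    h₁₃O 1 (by decide) (by decide)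
  have h₂₃x0 : p₂₃ (Ideal.Quotient.mk (d32Ideal R) (MvPolynomial.X 0)) = 0 :=
    h₂₃O 0 (by decide) (by decide)
  -- sections of the projections
  obtain ⟨σ₁₂, hσ₁₂X, hσ₁₂Y⟩ : ∃ f : WeilD2 R →ₐ[R] WeilD32 R,
      f (Ideal.Quotient.mk (sq2Ideal R) (MvPolynomial.X 0)) =
        Ideal.Quotient.mk (d32Ideal R) (MvPolynomial.X 0) ∧
      f (Ideal.Quotient.mk (sq2Ideal R) (MvPolynomial.X 1)) =
        Ideal.Quotient.mk (d32Ideal R) (MvPolynomial.X 1) :=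
    ⟨liftD2 ![Ideal.Quotient.mk (d32Ideal R) (MvPolynomial.X 0),
        Ideal.Quotient.mk (d32Ideal R) (MvPolynomial.X 1)]
      (fun i => by fin_cases i <;> simp [sq_x3]),
      by simpa using liftD2_mk _ _ 0, by simpa using liftD2_mk _ _ 1⟩
  obtain ⟨σ₁₃, hσ₁₃X, hσ₁₃Y⟩ : ∃ f : WeilD2 R →ₐ[R] WeilD32 R,
      f (Ideal.Quotient.mk (sq2Ideal R) (MvPolynomial.X 0)) =
        Ideal.Quotient.mk (d32Ideal R) (MvPolynomial.X 0) ∧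
      f (Ideal.Quotient.mk (sq2Ideal R) (MvPolynomial.X 1)) =
        Ideal.Quotient.mk (d32Ideal R) (MvPolynomial.X 2) :=
    ⟨liftD2 ![Ideal.Quotient.mk (d32Ideal R) (MvPolynomial.X 0),
        Ideal.Quotient.mk (d32Ideal R) (MvPolynomial.X 2)]
      (fun i => by fin_cases i <;> simp [sq_x3]),
      by simpa using liftD2_mk _ _ 0, by simpa using liftD2_mk _ _ 1⟩
  obtain ⟨σ₂₃, hσ₂₃X, hσ₂₃Y⟩ : ∃ f : WeilD2 R →ₐ[R] WeilD32 R,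
      f (Ideal.Quotient.mk (sq2Ideal R) (MvPolynomial.X 0)) =
        Ideal.Quotient.mk (d32Ideal R) (MvPolynomial.X 1) ∧
      f (Ideal.Quotient.mk (sq2Ideal R) (MvPolynomial.X 1)) =
        Ideal.Quotient.mk (d32Ideal R) (MvPolynomial.X 2) :=
    ⟨liftD2 ![Ideal.Quotient.mk (d32Ideal R) (MvPolynomial.X 1),
        Ideal.Quotient.mk (d32Ideal R) (MvPolynomial.X 2)]
      (fun i => by fin_cases i <;> simp [sq_x3]),
      by simpa using liftD2_mk _ _ 0, by simpa using liftD2_mk _ _ 1⟩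
  -- the maps `W_D → W_{D{3}_2}` sending `Z` to the variables, and to `0`
  obtain ⟨τ₁, hτ₁⟩ : ∃ f : WeilD1 R →ₐ[R] WeilD32 R,
      f (Ideal.Quotient.mk (Ideal.span {(Polynomial.X : Polynomial R) ^ 2}) Polynomial.X) =
        Ideal.Quotient.mk (d32Ideal R) (MvPolynomial.X 0) :=
    ⟨liftD1 _ (sq_x3 0), liftD1_mk _ _⟩
  obtain ⟨τ₂, hτ₂⟩ : ∃ f : WeilD1 R →ₐ[R] WeilD32 R,
      f (Ideal.Quotient.mk (Ideal.span {(Polynomial.X : Polynomial R) ^ 2}) Polynomial.X) =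
        Ideal.Quotient.mk (d32Ideal R) (MvPolynomial.X 1) :=
    ⟨liftD1 _ (sq_x3 1), liftD1_mk _ _⟩
  obtain ⟨τ₃, hτ₃⟩ : ∃ f : WeilD1 R →ₐ[R] WeilD32 R,
      f (Ideal.Quotient.mk (Ideal.span {(Polynomial.X : Polynomial R) ^ 2}) Polynomial.X) =
        Ideal.Quotient.mk (d32Ideal R) (MvPolynomial.X 2) :=
    ⟨liftD1 _ (sq_x3 2), liftD1_mk _ _⟩
  obtain ⟨e', he'⟩ : ∃ f : WeilD1 R →ₐ[R] WeilD32 R,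
      f (Ideal.Quotient.mk (Ideal.span {(Polynomial.X : Polynomial R) ^ 2}) Polynomial.X) = 0 :=
    ⟨liftD1 0 (by simp), liftD1_mk _ _⟩
  -- the maps `W_D → W_{D²}`
  obtain ⟨j₁, hj₁⟩ : ∃ f : WeilD1 R →ₐ[R] WeilD2 R,
      f (Ideal.Quotient.mk (Ideal.span {(Polynomial.X : Polynomial R) ^ 2}) Polynomial.X) =
        Ideal.Quotient.mk (sq2Ideal R) (MvPolynomial.X 0) :=
    ⟨liftD1 _ (sq_x2 0), liftD1_mk _ _⟩
  obtain ⟨j₂, hj₂⟩ : ∃ f : WeilD1 R →ₐ[R] WeilD2 R,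
      f (Ideal.Quotient.mk (Ideal.span {(Polynomial.X : Polynomial R) ^ 2}) Polynomial.X) =
        Ideal.Quotient.mk (sq2Ideal R) (MvPolynomial.X 1) :=
    ⟨liftD1 _ (sq_x2 1), liftD1_mk _ _⟩
  obtain ⟨ε, hε⟩ : ∃ f : WeilD1 R →ₐ[R] WeilD2 R,
      f (Ideal.Quotient.mk (Ideal.span {(Polynomial.X : Polynomial R) ^ 2}) Polynomial.X) = 0 :=
    ⟨liftD1 0 (by simp), liftD1_mk _ _⟩
  -- composition identities
  have E1 : ∀ z, p₁₂ (σ₁₂ z) = z := fun z => by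
    have h : p₁₂.comp σ₁₂ = AlgHom.id R (WeilD2 R) :=
      extD2 _ _ (by simp [hσ₁₂X, h₁₂X]) (by simp [hσ₁₂Y, h₁₂Y])
    simpa using AlgHom.congr_fun h z
  have E2 : ∀ z, p₁₂ (σ₁₃ z) = j₁ (q₁ z) := fun z => by
    have h : p₁₂.comp σ₁₃ = j₁.comp q₁ :=
      extD2 _ _ (by simp [hσ₁₃X, h₁₂X, hq₁X, hj₁]) (by simp [hσ₁₃Y, h₁₂x2, hq₁Y])
    simpa using AlgHom.congr_fun h z
  have E3 : ∀ z, p₁₂ (σ₂₃ z) = j₂ (q₁ z) := fun z => by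
    have h : p₁₂.comp σ₂₃ = j₂.comp q₁ :=
      extD2 _ _ (by simp [hσ₂₃X, h₁₂Y, hq₁X, hj₂]) (by simp [hσ₂₃Y, h₁₂x2, hq₁Y])
    simpa using AlgHom.congr_fun h z
  have E4 : ∀ w, p₁₂ (τ₁ w) = j₁ w := fun w => by
    have h : p₁₂.comp τ₁ = j₁ := extD1 _ _ (by simp [hτ₁, h₁₂X, hj₁])
    simpa using AlgHom.congr_fun h w
  have E5 : ∀ w, p₁₂ (τ₂ w) = j₂ w := fun w => by
    have h : p₁₂.comp τ₂ = j₂ := extD1 _ _ (by simp [hτ₂, h₁₂Y, hj₂])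
    simpa using AlgHom.congr_fun h w
  have E6 : ∀ w, p₁₂ (τ₃ w) = ε w := fun w => by
    have h : p₁₂.comp τ₃ = ε := extD1 _ _ (by simp [hτ₃, h₁₂x2, hε])
    simpa using AlgHom.congr_fun h w
  have E7 : ∀ w, p₁₂ (e' w) = ε w := fun w => by
    have h : p₁₂.comp e' = ε := extD1 _ _ (by simp [he', hε])
    simpa using AlgHom.congr_fun h w
  have F1 : ∀ z, p₁₃ (σ₁₂ z) = j₁ (q₁ z) := fun z => by
    have h : p₁₃.comp σ₁₂ = j₁.comp q₁ :=
      extD2 _ _ (by simp [hσ₁₂X, h₁₃X, hq₁X, hj₁]) (by simp [hσ₁₂Y, h₁₃x1, hq₁Y])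
    simpa using AlgHom.congr_fun h z
  have F2 : ∀ z, p₁₃ (σ₁₃ z) = z := fun z => by
    have h : p₁₃.comp σ₁₃ = AlgHom.id R (WeilD2 R) :=
      extD2 _ _ (by simp [hσ₁₃X, h₁₃X]) (by simp [hσ₁₃Y, h₁₃Y])
    simpa using AlgHom.congr_fun h z
  have F3 : ∀ z, p₁₃ (σ₂₃ z) = j₂ (q₂ z) := fun z => by
    have h : p₁₃.comp σ₂₃ = j₂.comp q₂ :=
      extD2 _ _ (by simp [hσ₂₃X, h₁₃x1, hq₂X]) (by simp [hσ₂₃Y, h₁₃Y, hq₂Y, hj₂])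
    simpa using AlgHom.congr_fun h z
  have F4 : ∀ w, p₁₃ (τ₁ w) = j₁ w := fun w => by
    have h : p₁₃.comp τ₁ = j₁ := extD1 _ _ (by simp [hτ₁, h₁₃X, hj₁])
    simpa using AlgHom.congr_fun h w
  have F5 : ∀ w, p₁₃ (τ₂ w) = ε w := fun w => by
    have h : p₁₃.comp τ₂ = ε := extD1 _ _ (by simp [hτ₂, h₁₃x1, hε])
    simpa using AlgHom.congr_fun h w
  have F6 : ∀ w, p₁₃ (τ₃ w) = j₂ w := fun w => by
    have h : p₁₃.comp τ₃ = j₂ := extD1 _ _ (by simp [hτ₃, h₁₃Y, hj₂])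
    simpa using AlgHom.congr_fun h w
  have F7 : ∀ w, p₁₃ (e' w) = ε w := fun w => by
    have h : p₁₃.comp e' = ε := extD1 _ _ (by simp [he', hε])
    simpa using AlgHom.congr_fun h w
  have G1 : ∀ z, p₂₃ (σ₁₂ z) = j₁ (q₂ z) := fun z => by
    have h : p₂₃.comp σ₁₂ = j₁.comp q₂ :=
      extD2 _ _ (by simp [hσ₁₂X, h₂₃x0, hq₂X]) (by simp [hσ₁₂Y, h₂₃X, hq₂Y, hj₁])
    simpa using AlgHom.congr_fun h z
  have G2 : ∀ z, p₂₃ (σ₁₃ z) = j₂ (q₂ z) := fun z => by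
    have h : p₂₃.comp σ₁₃ = j₂.comp q₂ :=
      extD2 _ _ (by simp [hσ₁₃X, h₂₃x0, hq₂X]) (by simp [hσ₁₃Y, h₂₃Y, hq₂Y, hj₂])
    simpa using AlgHom.congr_fun h z
  have G3 : ∀ z, p₂₃ (σ₂₃ z) = z := fun z => by
    have h : p₂₃.comp σ₂₃ = AlgHom.id R (WeilD2 R) :=
      extD2 _ _ (by simp [hσ₂₃X, h₂₃X]) (by simp [hσ₂₃Y, h₂₃Y])
    simpa using AlgHom.congr_fun h z
  have G4 : ∀ w, p₂₃ (τ₁ w) = ε w := fun w => by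
    have h : p₂₃.comp τ₁ = ε := extD1 _ _ (by simp [hτ₁, h₂₃x0, hε])
    simpa using AlgHom.congr_fun h w
  have G5 : ∀ w, p₂₃ (τ₂ w) = j₁ w := fun w => by
    have h : p₂₃.comp τ₂ = j₁ := extD1 _ _ (by simp [hτ₂, h₂₃X, hj₁])
    simpa using AlgHom.congr_fun h w
  have G6 : ∀ w, p₂₃ (τ₃ w) = j₂ w := fun w => by
    have h : p₂₃.comp τ₃ = j₂ := extD1 _ _ (by simp [hτ₃, h₂₃Y, hj₂])
    simpa using AlgHom.congr_fun h w
  have G7 : ∀ w, p₂₃ (e' w) = ε w := fun w => by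
    have h : p₂₃.comp e' = ε := extD1 _ _ (by simp [he', hε])
    simpa using AlgHom.congr_fun h w
  have Hc : ∀ z, ε (q₂ z) = ε (q₁ z) := fun z => by
    have h : ε.comp q₂ = ε.comp q₁ :=
      extD2 _ _ (by simp [hq₂X, hq₁X, hε]) (by simp [hq₂Y, hq₁Y, hε])
    simpa using AlgHom.congr_fun h z
  -- the key reconstruction identity
  have pow2 : ∀ (b : WeilD32 R), b ^ 2 = 0 → ∀ n, 2 ≤ n → b ^ n = 0 := by
    intro b hb n hn
    obtain ⟨m, rfl⟩ := Nat.exists_eq_add_of_le hn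
    rw [pow_add, hb, zero_mul]
  have base : ∀ n0 n1 n2 : ℕ,
      σ₁₂ (p₁₂ ((Ideal.Quotient.mk (d32Ideal R) (MvPolynomial.X 0)) ^ n0 *
        (Ideal.Quotient.mk (d32Ideal R) (MvPolynomial.X 1)) ^ n1 *
        (Ideal.Quotient.mk (d32Ideal R) (MvPolynomial.X 2)) ^ n2)) +
      σ₁₃ (p₁₃ ((Ideal.Quotient.mk (d32Ideal R) (MvPolynomial.X 0)) ^ n0 *
        (Ideal.Quotient.mk (d32Ideal R) (MvPolynomial.X 1)) ^ n1 *
        (Ideal.Quotient.mk (d32Ideal R) (MvPolynomial.X 2)) ^ n2)) +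
      σ₂₃ (p₂₃ ((Ideal.Quotient.mk (d32Ideal R) (MvPolynomial.X 0)) ^ n0 *
        (Ideal.Quotient.mk (d32Ideal R) (MvPolynomial.X 1)) ^ n1 *
        (Ideal.Quotient.mk (d32Ideal R) (MvPolynomial.X 2)) ^ n2)) -
      τ₁ (q₁ (p₁₂ ((Ideal.Quotient.mk (d32Ideal R) (MvPolynomial.X 0)) ^ n0 *
        (Ideal.Quotient.mk (d32Ideal R) (MvPolynomial.X 1)) ^ n1 *
        (Ideal.Quotient.mk (d32Ideal R) (MvPolynomial.X 2)) ^ n2))) -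
      τ₂ (q₂ (p₁₂ ((Ideal.Quotient.mk (d32Ideal R) (MvPolynomial.X 0)) ^ n0 *
        (Ideal.Quotient.mk (d32Ideal R) (MvPolynomial.X 1)) ^ n1 *
        (Ideal.Quotient.mk (d32Ideal R) (MvPolynomial.X 2)) ^ n2))) -
      τ₃ (q₂ (p₁₃ ((Ideal.Quotient.mk (d32Ideal R) (MvPolynomial.X 0)) ^ n0 *
        (Ideal.Quotient.mk (d32Ideal R) (MvPolynomial.X 1)) ^ n1 *
        (Ideal.Quotient.mk (d32Ideal R) (MvPolynomial.X 2)) ^ n2))) +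
      e' (q₁ (p₁₂ ((Ideal.Quotient.mk (d32Ideal R) (MvPolynomial.X 0)) ^ n0 *
        (Ideal.Quotient.mk (d32Ideal R) (MvPolynomial.X 1)) ^ n1 *
        (Ideal.Quotient.mk (d32Ideal R) (MvPolynomial.X 2)) ^ n2))) =
      (Ideal.Quotient.mk (d32Ideal R) (MvPolynomial.X 0)) ^ n0 *
        (Ideal.Quotient.mk (d32Ideal R) (MvPolynomial.X 1)) ^ n1 *
        (Ideal.Quotient.mk (d32Ideal R) (MvPolynomial.X 2)) ^ n2 := by
    intro n0 n1 n2
    by_cases H0 : 2 ≤ n0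
    · have h0 : (Ideal.Quotient.mk (d32Ideal R) (MvPolynomial.X 0)) ^ n0 = 0 :=
        pow2 _ (sq_x3 0) _ H0
      simp [h0]
    by_cases H1 : 2 ≤ n1
    · have h1 : (Ideal.Quotient.mk (d32Ideal R) (MvPolynomial.X 1)) ^ n1 = 0 :=
        pow2 _ (sq_x3 1) _ H1
      simp [h1]
    by_cases H2 : 2 ≤ n2
    · have h2 : (Ideal.Quotient.mk (d32Ideal R) (MvPolynomial.X 2)) ^ n2 = 0 :=
        pow2 _ (sq_x3 2) _ H2
      simp [h2]
    push_neg at H0 H1 H2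
    have H0' : n0 ≤ 1 := by omega
    have H1' : n1 ≤ 1 := by omega
    have H2' : n2 ≤ 1 := by omega
    interval_cases n0 <;> interval_cases n1 <;> interval_cases n2 <;>
      simp [h₁₂X, h₁₂Y, h₁₂x2, h₁₃X, h₁₃x1, h₁₃Y, h₂₃x0, h₂₃X, h₂₃Y,
        hq₁X, hq₁Y, hq₂X, hq₂Y, hσ₁₂X, hσ₁₂Y, hσ₁₃X, hσ₁₃Y, hσ₂₃X, hσ₂₃Y,
        hτ₁, hτ₂, hτ₃, he', cube_x3] <;>
      ring
  have key : ∀ b : WeilD32 R,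
      σ₁₂ (p₁₂ b) + σ₁₃ (p₁₃ b) + σ₂₃ (p₂₃ b) - τ₁ (q₁ (p₁₂ b)) - τ₂ (q₂ (p₁₂ b)) -
        τ₃ (q₂ (p₁₃ b)) + e' (q₁ (p₁₂ b)) = b := by
    intro b
    obtain ⟨P, rfl⟩ := Ideal.Quotient.mk_surjective b
    induction P using MvPolynomial.induction_on' with
    | add p q hp hq =>
      simp only [map_add]
      linear_combination hp + hq
    | monomial u r =>
      have hu : (MvPolynomial.monomial u (r : R)) =
          MvPolynomial.C r * (MvPolynomial.X 0 ^ u 0 * MvPolynomial.X 1 ^ u 1 *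
            MvPolynomial.X 2 ^ u 2) := by
        rw [MvPolynomial.monomial_eq,
          Finsupp.prod_fintype _ _ (fun i => pow_zero _), Fin.prod_univ_three]
      have halg : Ideal.Quotient.mk (d32Ideal R) (MvPolynomial.C r) =
          algebraMap R (WeilD32 R) r := rfl
      have hsplit : Ideal.Quotient.mk (d32Ideal R)
          (MvPolynomial.C r * (MvPolynomial.X 0 ^ u 0 * MvPolynomial.X 1 ^ u 1 *
            MvPolynomial.X 2 ^ u 2)) =
          algebraMap R (WeilD32 R) r *
            ((Ideal.Quotient.mk (d32Ideal R) (MvPolynomial.X 0)) ^ u 0 *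
              (Ideal.Quotient.mk (d32Ideal R) (MvPolynomial.X 1)) ^ u 1 *
              (Ideal.Quotient.mk (d32Ideal R) (MvPolynomial.X 2)) ^ u 2) := by
        simp only [map_mul, map_pow, halg]
      have scal2 : ∀ (g1 : WeilD2 R →ₐ[R] WeilD32 R) (g2 : WeilD32 R →ₐ[R] WeilD2 R)
          (b : WeilD32 R), g1 (g2 (algebraMap R (WeilD32 R) r * b)) =
            algebraMap R (WeilD32 R) r * g1 (g2 b) := by
        intro g1 g2 b
        rw [map_mul, AlgHom.commutes, map_mul, AlgHom.commutes]
      have scal3 : ∀ (g1 : WeilD1 R →ₐ[R] WeilD32 R) (g2 : WeilD2 R →ₐ[R] WeilD1 R)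
          (g3 : WeilD32 R →ₐ[R] WeilD2 R) (b : WeilD32 R),
          g1 (g2 (g3 (algebraMap R (WeilD32 R) r * b))) =
            algebraMap R (WeilD32 R) r * g1 (g2 (g3 b)) := by
        intro g1 g2 g3 b
        rw [map_mul, AlgHom.commutes, map_mul, AlgHom.commutes, map_mul, AlgHom.commutes]
      have hbase := base (u 0) (u 1) (u 2)
      rw [hu, hsplit, scal2 σ₁₂ p₁₂, scal2 σ₁₃ p₁₃, scal2 σ₂₃ p₂₃, scal3 τ₁ q₁ p₁₂,
        scal3 τ₂ q₂ p₁₂, scal3 τ₃ q₂ p₁₃, scal3 e' q₁ p₁₂]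
      linear_combination (algebraMap R (WeilD32 R) r) * hbase
  -- existence
  refine ⟨σ₁₂ a₁₂ + σ₁₃ a₁₃ + σ₂₃ a₂₃ - τ₁ (q₁ a₁₂) - τ₂ (q₂ a₁₂) - τ₃ (q₂ a₁₃) +
      e' (q₁ a₁₂), ⟨?_, ?_, ?_⟩, ?_⟩
  · simp only [map_add, map_sub, E1, E2, E3, E4, E5, E6, E7]
    rw [← c₁, ← c₂, Hc a₁₃, ← c₁]
    ring
  · simp only [map_add, map_sub, F1, F2, F3, F4, F5, F6, F7]
    rw [← c₃, Hc a₁₂]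
    ring
  · simp only [map_add, map_sub, G1, G2, G3, G4, G5, G6, G7]
    ring
  · rintro b ⟨hb1, hb2, hb3⟩
    rw [← key b, hb1, hb2, hb3]
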